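/- If hyperplanes W_1,...,W_n (subspaces of dimension d-1) do phase retrieval in R^d, then n ≥ 2d-2. -/

import Mathlib

open scoped InnerProductSpace

open Module Submodule in
/-- The intersection of `k` hyperplane-like subspaces has codimension at most `k`. -/
lemma finrank_iInf_finset_ge {d n : ℕ}
    (W : Fin n → Submodule ℝ (EuclideanSpace ℝ (Fin d)))
    (hdim : ∀ i, Module.finrank ℝ (W i) = d - 1)
    (s : Finset (Fin n)) :
    d - s.card ≤ Module.finrank ℝ ↥(⨅ i ∈ s, W i) := by
  classical
  induction s using Finset.induction_on with
  | empty =>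
      have h : (⨅ i ∈ (∅ : Finset (Fin n)), W i) = ⊤ := by simp
      rw [h, finrank_top]
      simp [finrank_euclideanSpace]
  | insert j s hj ih =>
      rw [Finset.iInf_insert]
      have h1 := Submodule.finrank_sup_add_finrank_inf_eq (W j) (⨅ i ∈ s, W i)
      have h2 : Module.finrank ℝ ↥(W j ⊔ ⨅ i ∈ s, W i) ≤ d := by
        have := Submodule.finrank_le (W j ⊔ ⨅ i ∈ s, W i)
        simpa [finrank_euclideanSpace] using this
      have h3 := hdim j
      rw [Finset.card_insert_of_notMem hj]
      omega

/-- Hyperplanes doing phase retrieval in `ℝ^d` number at least `2d - 2`. -/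
theorem hyperplanes_phase_retrieval_lower_bound (d n : ℕ)
    (W : Fin n → Submodule ℝ (EuclideanSpace ℝ (Fin d)))
    (hdim : ∀ i, Module.finrank ℝ (W i) = d - 1)
    (hPR : ∀ x y : EuclideanSpace ℝ (Fin d),
      (∀ i, ‖(Submodule.orthogonalProjectionOnto (W i) x : EuclideanSpace ℝ (Fin d))‖
        = ‖(Submodule.orthogonalProjectionOnto (W i) y : EuclideanSpace ℝ (Fin d))‖) → x = y ∨ x = -y) :
    2 * d - 2 ≤ n := by
  classical
  by_contra hn
  push_neg at hn
  have hd2 : 2 ≤ d := by omega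
  set A : Finset (Fin n) := Finset.univ.filter (fun i => (i : ℕ) < d - 2) with hA
  set B : Finset (Fin n) := Finset.univ.filter (fun i => ¬ (i : ℕ) < d - 2) with hB
  have hAcard : A.card ≤ d - 2 := by
    have h := Finset.card_le_card_of_injOn (s := A) (f := fun i : Fin n => (i : ℕ))
      (t := Finset.range (d - 2)) ?_ ?_
    · simpa using h
    · intro i hi
      have hi' := (Finset.mem_filter.mp hi).2
      simpa using hi'
    · exact fun x _ y _ h => Fin.val_injective h
  have hBcard : B.card ≤ d - 1 := by
    have h := Finset.card_le_card_of_injOn (s := B) (f := fun i : Fin n => (i : ℕ))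
      (t := Finset.Ico (d - 2) n) ?_ ?_
    · have hc : (Finset.Ico (d - 2) n).card = n - (d - 2) := Nat.card_Ico _ _
      rw [hc] at h
      omega
    · intro i hi
      have hi' := (Finset.mem_filter.mp hi).2
      exact Finset.mem_Ico.mpr ⟨by simp only at hi' ⊢; omega, i.isLt⟩
    · exact fun x _ y _ h => Fin.val_injective h
  -- the two intersection subspaces
  have hVBrank : 1 ≤ Module.finrank ℝ ↥(⨅ i ∈ B, W i) := by
    have := finrank_iInf_finset_ge W hdim B
    omega
  have hUArank : 2 ≤ Module.finrank ℝ ↥(⨅ i ∈ A, W i) := by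
    have := finrank_iInf_finset_ge W hdim A
    omega
  -- pick b ≠ 0 in the intersection over B
  have : Nontrivial ↥(⨅ i ∈ B, W i) :=
    (Module.finrank_pos_iff (R := ℝ)).mp (by omega)
  obtain ⟨b₀, hb₀⟩ := exists_ne (0 : ↥(⨅ i ∈ B, W i))
  set b : EuclideanSpace ℝ (Fin d) := (b₀ : EuclideanSpace ℝ (Fin d)) with hbdef
  have hbne : b ≠ 0 := fun h => hb₀ (Subtype.ext h)
  have hbVB : b ∈ ⨅ i ∈ B, W i := b₀.2
  -- pick a ≠ 0 in (⨅ A) ⊓ (span {b})ᗮ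
  have hSrank : 1 ≤ Module.finrank ℝ ↥((⨅ i ∈ A, W i) ⊓ (ℝ ∙ b)ᗮ) := by
    have h1 := Submodule.finrank_sup_add_finrank_inf_eq (⨅ i ∈ A, W i) ((ℝ ∙ b)ᗮ)
    have h2 : Module.finrank ℝ ↥((⨅ i ∈ A, W i) ⊔ (ℝ ∙ b)ᗮ) ≤ d := by
      have := Submodule.finrank_le ((⨅ i ∈ A, W i) ⊔ (ℝ ∙ b)ᗮ)
      simpa [finrank_euclideanSpace] using this
    have h3 : Module.finrank ℝ ↥(ℝ ∙ b) + Module.finrank ℝ ↥((ℝ ∙ b)ᗮ) = d := by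
      have := Submodule.finrank_add_finrank_orthogonal (𝕜 := ℝ) (ℝ ∙ b)
      simpa [finrank_euclideanSpace] using this
    have h4 : Module.finrank ℝ ↥(ℝ ∙ b) = 1 := finrank_span_singleton hbne
    omega
  have : Nontrivial ↥((⨅ i ∈ A, W i) ⊓ (ℝ ∙ b)ᗮ) :=
    (Module.finrank_pos_iff (R := ℝ)).mp (by omega)
  obtain ⟨a₀, ha₀⟩ := exists_ne (0 : ↥((⨅ i ∈ A, W i) ⊓ (ℝ ∙ b)ᗮ))
  set a : EuclideanSpace ℝ (Fin d) := (a₀ : EuclideanSpace ℝ (Fin d)) with hadef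
  have hane : a ≠ 0 := fun h => ha₀ (Subtype.ext h)
  have haUA : a ∈ ⨅ i ∈ A, W i := a₀.2.1
  have hab : ⟪a, b⟫_ℝ = 0 := by
    have := a₀.2.2 b (Submodule.mem_span_singleton_self b)
    rwa [real_inner_comm] at this
  -- the two test vectors have equal projection norms
  have key : ∀ i, ‖(Submodule.orthogonalProjectionOnto (W i) (a + b) : EuclideanSpace ℝ (Fin d))‖
      = ‖(Submodule.orthogonalProjectionOnto (W i) (a - b) : EuclideanSpace ℝ (Fin d))‖ := by
    intro i
    by_cases hi : (i : ℕ) < d - 2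
    · -- i ∈ A, so a ∈ W i
      have haW : a ∈ W i := by
        have hle : (⨅ i ∈ A, W i) ≤ W i :=
          iInf_le_of_le i (iInf_le_of_le (by simp [hA, hi]) le_rfl)
        exact hle haUA
      have hPa : (Submodule.orthogonalProjectionOnto (W i) a : EuclideanSpace ℝ (Fin d)) = a :=
        Submodule.starProjection_eq_self_iff.mpr haW
      have horth : ⟪a, (Submodule.orthogonalProjectionOnto (W i) b : EuclideanSpace ℝ (Fin d))⟫_ℝ = 0 := by
        rw [← Submodule.starProjection_apply, ← Submodule.inner_starProjection_left_eq_right,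
          Submodule.starProjection_apply, hPa]
        exact hab
      have e1 : (Submodule.orthogonalProjectionOnto (W i) (a + b) : EuclideanSpace ℝ (Fin d))
          = a + (Submodule.orthogonalProjectionOnto (W i) b : EuclideanSpace ℝ (Fin d)) := by
        rw [map_add, Submodule.coe_add, hPa]
      have e2 : (Submodule.orthogonalProjectionOnto (W i) (a - b) : EuclideanSpace ℝ (Fin d))
          = a - (Submodule.orthogonalProjectionOnto (W i) b : EuclideanSpace ℝ (Fin d)) := by
        rw [map_sub, Submodule.coe_sub, hPa]
      rw [e1, e2, ← Real.sqrt_sq (norm_nonneg _), ← Real.sqrt_sq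
        (norm_nonneg (a - (Submodule.orthogonalProjectionOnto (W i) b : EuclideanSpace ℝ (Fin d)))),
        norm_add_sq_real, norm_sub_sq_real, horth]
      ring_nf
    · -- i ∈ B, so b ∈ W i
      have hbW : b ∈ W i := by
        have hle : (⨅ i ∈ B, W i) ≤ W i :=
          iInf_le_of_le i (iInf_le_of_le (by simp only [hB, Finset.mem_filter, Finset.mem_univ, true_and]; exact hi) le_rfl)
        exact hle hbVB
      have hPb : (Submodule.orthogonalProjectionOnto (W i) b : EuclideanSpace ℝ (Fin d)) = b :=
        Submodule.starProjection_eq_self_iff.mpr hbW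
      have horth : ⟪(Submodule.orthogonalProjectionOnto (W i) a : EuclideanSpace ℝ (Fin d)), b⟫_ℝ = 0 := by
        rw [← Submodule.starProjection_apply, Submodule.inner_starProjection_left_eq_right,
          Submodule.starProjection_apply, hPb]
        exact hab
      have e1 : (Submodule.orthogonalProjectionOnto (W i) (a + b) : EuclideanSpace ℝ (Fin d))
          = (Submodule.orthogonalProjectionOnto (W i) a : EuclideanSpace ℝ (Fin d)) + b := by
        rw [map_add, Submodule.coe_add, hPb]
      have e2 : (Submodule.orthogonalProjectionOnto (W i) (a - b) : EuclideanSpace ℝ (Fin d))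
          = (Submodule.orthogonalProjectionOnto (W i) a : EuclideanSpace ℝ (Fin d)) - b := by
        rw [map_sub, Submodule.coe_sub, hPb]
      rw [e1, e2, ← Real.sqrt_sq (norm_nonneg _), ← Real.sqrt_sq
        (norm_nonneg ((Submodule.orthogonalProjectionOnto (W i) a : EuclideanSpace ℝ (Fin d)) - b)),
        norm_add_sq_real, norm_sub_sq_real, horth]
      ring_nf
  rcases hPR (a + b) (a - b) key with h | h
  · -- a + b = a - b forces b = 0
    apply hbne
    have h2 : (2 : ℝ) • b = (a + b) - (a - b) := by module
    rw [h, sub_self] at h2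
    exact (smul_eq_zero.mp h2).resolve_left (by norm_num)
  · -- a + b = -(a - b) forces a = 0
    apply hane
    have h2 : (2 : ℝ) • a = (a + b) + (a - b) := by module
    rw [h] at h2
    simp only [neg_add_cancel] at h2
    exact (smul_eq_zero.mp h2).resolve_left (by norm_num)
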